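/- arXiv:2005.00060 — 2 statements merged into one kernel-verified Lean document; each statement's English description precedes it below -/
import Mathlib

section
/- Let E be a nontrivial finite-dimensional real inner product space. For i = 1, 2, let Hᵢ : E → E be a symmetric linear operator with largest eigenvalue λᵢ, let vᵢ ∈ E be a unit eigenvector of Hᵢ with Hᵢ vᵢ = λᵢ vᵢ, let uᵢ ∈ E be a unit vector with ⟨uᵢ, vᵢ⟩ = c for a common value c ∈ ℝ, and set hᵢ := ⟨uᵢ − vᵢ, Hᵢ(uᵢ − vᵢ)⟩. Then (2c − 1)·λ₂ − λ₁ + h₂ ≤ ⟨u₂, H₂ u₂⟩ − ⟨u₁, H₁ u₁⟩ ≤ λ₂ − (2c − 1)·λ₁ − h₁. -/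
open scoped RealInnerProductSpace

lemma rayleigh_le_greatest' {E : Type*} [NormedAddCommGroup E] [InnerProductSpace ℝ E]
    [FiniteDimensional ℝ E] [Nontrivial E]
    (T : E →ₗ[ℝ] E) (hT : ∀ a b : E, ⟪T a, b⟫ = ⟪a, T b⟫) (lam : ℝ)
    (hmax : IsGreatest {μ : ℝ | Module.End.HasEigenvalue T μ} lam)
    (u : E) (hu : ‖u‖ = 1) : ⟪u, T u⟫ ≤ lam := by
  have hsym : T.IsSymmetric := fun a b => hT a b
  have hs := hsym.hasEigenvalue_iSup_of_finiteDimensional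
  have hle : (⨆ x : { x : E // x ≠ 0 }, RCLike.re ⟪T x, x⟫ / ‖(x : E)‖ ^ 2 : ℝ) ≤ lam := by
    exact hmax.2 hs
  set C := ‖(LinearMap.toContinuousLinearMap T)‖ with hC
  have hb : BddAbove (Set.range fun x : { x : E // x ≠ 0 } =>
      RCLike.re ⟪T (x : E), (x : E)⟫ / ‖(x : E)‖ ^ 2) := by
    refine ⟨C, ?_⟩
    rintro _ ⟨⟨x, hx⟩, rfl⟩
    have hx' : (0:ℝ) < ‖x‖ := norm_pos_iff.mpr hx
    have : RCLike.re ⟪T x, x⟫ ≤ C * ‖x‖ ^ 2 := by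
      have h1 : RCLike.re ⟪T x, x⟫ ≤ ‖T x‖ * ‖x‖ := by
        calc RCLike.re ⟪T x, x⟫ ≤ |⟪T x, x⟫| := le_abs_self _
        _ ≤ ‖T x‖ * ‖x‖ := abs_real_inner_le_norm _ _
      have h2 : ‖T x‖ ≤ C * ‖x‖ := by
        simpa using (LinearMap.toContinuousLinearMap T).le_opNorm x
      calc RCLike.re ⟪T x, x⟫ ≤ ‖T x‖ * ‖x‖ := h1
      _ ≤ (C * ‖x‖) * ‖x‖ := by nlinarith [norm_nonneg (T x)]
      _ = C * ‖x‖ ^ 2 := by ring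
    rw [div_le_iff₀ (by positivity)]
    simpa using this
  have hu0 : u ≠ 0 := by intro h; rw [h] at hu; simp at hu
  have := le_ciSup hb (⟨u, hu0⟩ : { x : E // x ≠ 0 })
  have heq : RCLike.re ⟪T u, u⟫ / ‖u‖ ^ 2 = ⟪u, T u⟫ := by
    simp [hu, real_inner_comm]
  rw [heq] at this
  exact this.trans hle

lemma rayleigh_identity {E : Type*} [NormedAddCommGroup E] [InnerProductSpace ℝ E]
    (T : E →ₗ[ℝ] E) (hT : ∀ a b : E, ⟪T a, b⟫ = ⟪a, T b⟫) (lam : ℝ)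
    (v : E) (hv : ‖v‖ = 1) (he : T v = lam • v)
    (u : E) (hu : ‖u‖ = 1) (c : ℝ) (hc : ⟪u, v⟫ = c) :
    ⟪u, T u⟫ = (2 * c - 1) * lam + ⟪u - v, T (u - v)⟫ := by
  have hvv : ⟪v, v⟫ = 1 := by
    rw [real_inner_self_eq_norm_sq, hv]; norm_num
  have h1 : ⟪u, T v⟫ = lam * c := by rw [he, real_inner_smul_right, hc]
  have h2 : ⟪v, T u⟫ = lam * c := by rw [← hT, he, real_inner_smul_left, real_inner_comm, hc]
  have h3 : ⟪v, T v⟫ = lam := by rw [he, real_inner_smul_right, hvv]; ring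
  have : ⟪u - v, T (u - v)⟫ = ⟪u, T u⟫ - ⟪u, T v⟫ - ⟪v, T u⟫ + ⟪v, T v⟫ := by
    rw [map_sub, inner_sub_left, inner_sub_right, inner_sub_right]; ring
  rw [this, h1, h2, h3]; ring

/-- Sandwich inequality for the difference of two Rayleigh quotients, the quantitative
core of Proposition 1. -/
theorem rayleigh_difference_sandwich
    {E : Type*} [NormedAddCommGroup E] [InnerProductSpace ℝ E]
    [FiniteDimensional ℝ E] [Nontrivial E]
    (H₁ H₂ : E →ₗ[ℝ] E)
    (hH₁ : ∀ a b : E, ⟪H₁ a, b⟫ = ⟪a, H₁ b⟫)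
    (hH₂ : ∀ a b : E, ⟪H₂ a, b⟫ = ⟪a, H₂ b⟫)
    (lam₁ lam₂ : ℝ)
    (h₁max : IsGreatest {μ : ℝ | Module.End.HasEigenvalue H₁ μ} lam₁)
    (h₂max : IsGreatest {μ : ℝ | Module.End.HasEigenvalue H₂ μ} lam₂)
    (v₁ v₂ : E) (hv₁ : ‖v₁‖ = 1) (hv₂ : ‖v₂‖ = 1)
    (he₁ : H₁ v₁ = lam₁ • v₁) (he₂ : H₂ v₂ = lam₂ • v₂)
    (u₁ u₂ : E) (hu₁ : ‖u₁‖ = 1) (hu₂ : ‖u₂‖ = 1)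
    (c : ℝ) (hc₁ : ⟪u₁, v₁⟫ = c) (hc₂ : ⟪u₂, v₂⟫ = c)
    (h₁ h₂ : ℝ)
    (hh₁ : h₁ = ⟪u₁ - v₁, H₁ (u₁ - v₁)⟫)
    (hh₂ : h₂ = ⟪u₂ - v₂, H₂ (u₂ - v₂)⟫) :
    (2 * c - 1) * lam₂ - lam₁ + h₂ ≤ ⟪u₂, H₂ u₂⟫ - ⟪u₁, H₁ u₁⟫ ∧
      ⟪u₂, H₂ u₂⟫ - ⟪u₁, H₁ u₁⟫ ≤ lam₂ - (2 * c - 1) * lam₁ - h₁ := by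
  have id₁ : ⟪u₁, H₁ u₁⟫ = (2 * c - 1) * lam₁ + h₁ := by
    rw [hh₁]; exact rayleigh_identity H₁ hH₁ lam₁ v₁ hv₁ he₁ u₁ hu₁ c hc₁
  have id₂ : ⟪u₂, H₂ u₂⟫ = (2 * c - 1) * lam₂ + h₂ := by
    rw [hh₂]; exact rayleigh_identity H₂ hH₂ lam₂ v₂ hv₂ he₂ u₂ hu₂ c hc₂
  have b₁ : ⟪u₁, H₁ u₁⟫ ≤ lam₁ := rayleigh_le_greatest' H₁ hH₁ lam₁ h₁max u₁ hu₁
  have b₂ : ⟪u₂, H₂ u₂⟫ ≤ lam₂ := rayleigh_le_greatest' H₂ hH₂ lam₂ h₂max u₂ hu₂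
  constructor <;> linarith
end

section
/- Let E be a nontrivial finite-dimensional real inner product space and x ∈ E. For i = 1, 2, let lᵢ : E → ℝ be a function, gᵢ ∈ E a nonzero vector, and Hᵢ : E → E a symmetric linear operator such that lᵢ(x + δ) = lᵢ(x) + ⟨gᵢ, δ⟩ + (1/2)·⟨δ, Hᵢ δ⟩ for all δ ∈ E. Assume l₁(x) = l₂(x) and ‖g₁‖ = ‖g₂‖. Let λᵢ be the largest eigenvalue of Hᵢ, let vᵢ be a unit eigenvector of Hᵢ with Hᵢ vᵢ = λᵢ vᵢ, suppose the normalized gradients ĝᵢ := gᵢ/‖gᵢ‖ satisfy ⟨ĝᵢ, vᵢ⟩ = c for a common value c ∈ ℝ, and set hᵢ := ⟨ĝᵢ − vᵢ, Hᵢ(ĝᵢ − vᵢ)⟩. Fix ε > 0 and define Rᵢ := lᵢ(x + ε·ĝᵢ). Then (ε²/2)·((2c − 1)·λ₂ − λ₁ + h₂) ≤ R₂ − R₁ ≤ (ε²/2)·(λ₂ − (2c − 1)·λ₁ − h₁). In particular, if ĝᵢ = vᵢ (perfect alignment, c = 1, hᵢ = 0), then Rᵢ = lᵢ(x) + ε·‖gᵢ‖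 + (ε²/2)·λᵢ and R₂ − R₁ = (ε²/2)·(λ₂ − λ₁), so the first-order robustness loss is an increasing affine function of the largest eigenvalue of the input Hessian. -/
open scoped RealInnerProductSpace

/-- Rayleigh quotient of a unit vector is at most the greatest eigenvalue. -/
lemma rayleigh_le_greatest_eigenvalue
    {E : Type*} [NormedAddCommGroup E] [InnerProductSpace ℝ E]
    [FiniteDimensional ℝ E] [Nontrivial E]
    (H : E →ₗ[ℝ] E) (hsym : ∀ a b : E, ⟪H a, b⟫ = ⟪a, H b⟫)
    (lam : ℝ) (hmax : IsGreatest {μ : ℝ | Module.End.HasEigenvalue H μ} lam)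
    (u : E) (hu : ‖u‖ = 1) : ⟪u, H u⟫ ≤ lam := by
  have hsym' : H.IsSymmetric := fun a b => hsym a b
  have hS := hsym'.hasEigenvalue_iSup_of_finiteDimensional
  have hSle : (⨆ x : { x : E // x ≠ 0 }, RCLike.re ⟪H x, (x : E)⟫ / ‖(x : E)‖ ^ 2 : ℝ) ≤ lam :=
    hmax.2 hS
  have hune : u ≠ 0 := by
    intro h; rw [h, norm_zero] at hu; norm_num at hu
  set T := LinearMap.toContinuousLinearMap H with hT
  have hbdd : BddAbove (Set.range fun x : { x : E // x ≠ 0 } =>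
      RCLike.re ⟪H x, (x : E)⟫ / ‖(x : E)‖ ^ 2) := by
    refine ⟨‖T‖, ?_⟩
    rintro y ⟨⟨z, hz⟩, rfl⟩
    simp only [RCLike.re_to_real]
    have h1 : ⟪H z, z⟫ ≤ ‖H z‖ * ‖z‖ := real_inner_le_norm _ _
    have h2 : ‖H z‖ ≤ ‖T‖ * ‖z‖ := by
      have := T.le_opNorm z
      simpa [hT] using this
    have hz0 : (0:ℝ) < ‖z‖ := norm_pos_iff.mpr hz
    rw [div_le_iff₀ (by positivity)]
    calc ⟪H z, z⟫ ≤ ‖H z‖ * ‖z‖ := h1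
      _ ≤ (‖T‖ * ‖z‖) * ‖z‖ := by nlinarith
      _ = ‖T‖ * ‖z‖ ^ 2 := by ring
  have hle : RCLike.re ⟪H u, u⟫ / ‖u‖ ^ 2 ≤
      (⨆ x : { x : E // x ≠ 0 }, RCLike.re ⟪H x, (x : E)⟫ / ‖(x : E)‖ ^ 2 : ℝ) :=
    le_ciSup hbdd ⟨u, hune⟩
  have : ⟪H u, u⟫ ≤ lam := by
    have := hle.trans hSle
    simpa [hu] using this
  rwa [real_inner_comm] at this

/-- Proposition 1 (exact form): the difference of the first-order robustness losses of two
models is sandwiched between linear expressions in the largest eigenvalues of the input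
Hessians; under perfect alignment of the normalized input gradient with the top
eigenvector, the robustness loss is an increasing affine function of the largest
eigenvalue of the input Hessian. -/
theorem robustness_loss_correlates_with_largest_eigenvalue
    {E : Type*} [NormedAddCommGroup E] [InnerProductSpace ℝ E]
    [FiniteDimensional ℝ E] [Nontrivial E]
    (x : E) (l₁ l₂ : E → ℝ) (g₁ g₂ : E) (hg₁ : g₁ ≠ 0) (hg₂ : g₂ ≠ 0)
    (H₁ H₂ : E →ₗ[ℝ] E)
    (hsym₁ : ∀ a b : E, ⟪H₁ a, b⟫ = ⟪a, H₁ b⟫)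
    (hsym₂ : ∀ a b : E, ⟪H₂ a, b⟫ = ⟪a, H₂ b⟫)
    (hexp₁ : ∀ δ : E, l₁ (x + δ) = l₁ x + ⟪g₁, δ⟫ + (1 / 2) * ⟪δ, H₁ δ⟫)
    (hexp₂ : ∀ δ : E, l₂ (x + δ) = l₂ x + ⟪g₂, δ⟫ + (1 / 2) * ⟪δ, H₂ δ⟫)
    (hl : l₁ x = l₂ x) (hnorm : ‖g₁‖ = ‖g₂‖)
    (lam₁ lam₂ : ℝ)
    (h₁max : IsGreatest {μ : ℝ | Module.End.HasEigenvalue H₁ μ} lam₁)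
    (h₂max : IsGreatest {μ : ℝ | Module.End.HasEigenvalue H₂ μ} lam₂)
    (v₁ v₂ : E) (hv₁ : ‖v₁‖ = 1) (hv₂ : ‖v₂‖ = 1)
    (he₁ : H₁ v₁ = lam₁ • v₁) (he₂ : H₂ v₂ = lam₂ • v₂)
    (ghat₁ ghat₂ : E) (hghat₁ : ghat₁ = ‖g₁‖⁻¹ • g₁) (hghat₂ : ghat₂ = ‖g₂‖⁻¹ • g₂)
    (c : ℝ) (hc₁ : ⟪ghat₁, v₁⟫ = c) (hc₂ : ⟪ghat₂, v₂⟫ = c)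
    (h₁ h₂ : ℝ)
    (hh₁ : h₁ = ⟪ghat₁ - v₁, H₁ (ghat₁ - v₁)⟫)
    (hh₂ : h₂ = ⟪ghat₂ - v₂, H₂ (ghat₂ - v₂)⟫)
    (ε : ℝ) (hε : 0 < ε)
    (R₁ R₂ : ℝ) (hR₁ : R₁ = l₁ (x + ε • ghat₁)) (hR₂ : R₂ = l₂ (x + ε • ghat₂)) :
    ((ε ^ 2 / 2) * ((2 * c - 1) * lam₂ - lam₁ + h₂) ≤ R₂ - R₁ ∧
        R₂ - R₁ ≤ (ε ^ 2 / 2) * (lam₂ - (2 * c - 1) * lam₁ - h₁)) ∧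
      (ghat₁ = v₁ → ghat₂ = v₂ →
        R₁ = l₁ x + ε * ‖g₁‖ + (ε ^ 2 / 2) * lam₁ ∧
        R₂ = l₂ x + ε * ‖g₂‖ + (ε ^ 2 / 2) * lam₂ ∧
        R₂ - R₁ = (ε ^ 2 / 2) * (lam₂ - lam₁)) := by
  have hn₁ : ‖g₁‖ ≠ 0 := norm_ne_zero_iff.mpr hg₁
  have hn₂ : ‖g₂‖ ≠ 0 := norm_ne_zero_iff.mpr hg₂
  have hug₁ : ‖ghat₁‖ = 1 := by
    rw [hghat₁, norm_smul]; simp [abs_of_nonneg (inv_nonneg.mpr (norm_nonneg g₁)), hn₁]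
  have hug₂ : ‖ghat₂‖ = 1 := by
    rw [hghat₂, norm_smul]; simp [abs_of_nonneg (inv_nonneg.mpr (norm_nonneg g₂)), hn₂]
  set q₁ : ℝ := ⟪ghat₁, H₁ ghat₁⟫ with hq₁
  set q₂ : ℝ := ⟪ghat₂, H₂ ghat₂⟫ with hq₂
  -- inner products with gradient
  have hgin₁ : ⟪g₁, ghat₁⟫ = ‖g₁‖ := by
    rw [hghat₁, real_inner_smul_right, real_inner_self_eq_norm_sq]
    field_simp
  have hgin₂ : ⟪g₂, ghat₂⟫ = ‖g₂‖ := by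
    rw [hghat₂, real_inner_smul_right, real_inner_self_eq_norm_sq]
    field_simp
  -- R formulas
  have hRf₁ : R₁ = l₁ x + ε * ‖g₁‖ + (ε ^ 2 / 2) * q₁ := by
    rw [hR₁, hexp₁]
    rw [real_inner_smul_right, map_smul, real_inner_smul_left, real_inner_smul_right, hgin₁]
    ring
  have hRf₂ : R₂ = l₂ x + ε * ‖g₂‖ + (ε ^ 2 / 2) * q₂ := by
    rw [hR₂, hexp₂]
    rw [real_inner_smul_right, map_smul, real_inner_smul_left, real_inner_smul_right, hgin₂]
    ring
  -- h expansion: h = q - 2 c lam + lam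
  have hexp_h : ∀ (H : E →ₗ[ℝ] E) (hsym : ∀ a b : E, ⟪H a, b⟫ = ⟪a, H b⟫)
      (lam : ℝ) (v g : E) (hv : ‖v‖ = 1) (he : H v = lam • v) (hcv : ⟪g, v⟫ = c),
      ⟪g - v, H (g - v)⟫ = ⟪g, H g⟫ - 2 * c * lam + lam := by
    intro H hsym lam v g hv he hcv
    have h1 : ⟪g, H v⟫ = lam * c := by
      rw [he, real_inner_smul_right, hcv]
    have h2 : ⟪v, H g⟫ = lam * c := by
      rw [← hsym, he, real_inner_smul_left, real_inner_comm, hcv]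
    have h3 : ⟪v, H v⟫ = lam := by
      rw [he, real_inner_smul_right, real_inner_self_eq_norm_sq, hv]; ring
    rw [map_sub, inner_sub_left, inner_sub_right, inner_sub_right, h1, h2, h3]
    ring
  have hh₁' : h₁ = q₁ - 2 * c * lam₁ + lam₁ := by
    rw [hh₁, hexp_h H₁ hsym₁ lam₁ v₁ ghat₁ hv₁ he₁ hc₁]
  have hh₂' : h₂ = q₂ - 2 * c * lam₂ + lam₂ := by
    rw [hh₂, hexp_h H₂ hsym₂ lam₂ v₂ ghat₂ hv₂ he₂ hc₂]
  have hq₁le : q₁ ≤ lam₁ := rayleigh_le_greatest_eigenvalue H₁ hsym₁ lam₁ h₁max ghat₁ hug₁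
  have hq₂le : q₂ ≤ lam₂ := rayleigh_le_greatest_eigenvalue H₂ hsym₂ lam₂ h₂max ghat₂ hug₂
  have hdiff : R₂ - R₁ = (ε ^ 2 / 2) * (q₂ - q₁) := by
    rw [hRf₁, hRf₂, hl, hnorm]; ring
  have hk : (0:ℝ) ≤ ε ^ 2 / 2 := by positivity
  constructor
  · constructor
    · have : (2 * c - 1) * lam₂ - lam₁ + h₂ ≤ q₂ - q₁ := by linarith [hh₂'] 
      nlinarith [mul_le_mul_of_nonneg_left this hk]
    · have : q₂ - q₁ ≤ lam₂ - (2 * c - 1) * lam₁ - h₁ := by linarith [hh₁']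
      nlinarith [mul_le_mul_of_nonneg_left this hk]
  · intro hgv₁ hgv₂
    have hq₁eq : q₁ = lam₁ := by
      rw [hq₁, hgv₁, he₁, real_inner_smul_right, real_inner_self_eq_norm_sq, hv₁]; ring
    have hq₂eq : q₂ = lam₂ := by
      rw [hq₂, hgv₂, he₂, real_inner_smul_right, real_inner_self_eq_norm_sq, hv₂]; ring
    refine ⟨by rw [hRf₁, hq₁eq], by rw [hRf₂, hq₂eq], ?_⟩
    rw [hdiff, hq₁eq, hq₂eq]
end
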